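/- Fix an open set 𝒰 ⊆ E^∞. Say that a pair (x⃗, X) of a finite block sequence and a block subspace is good if II has a strategy in G_X(x⃗) to play in 𝒰; bad if for every block subspace Y ⊆ X the pair (x⃗, Y) is not good; and worse if it is bad and there exists n ∈ ℕ such that for every nonzero y ∈ X with n < y, the pair (x⃗⌢y, X) is bad. Then: if (x⃗, X) is bad, there is a block subspace Z ⊆ X such that (x⃗, Z) is worse. -/

import Mathlib

section Defs

variable {𝔽 : Type} [Field 𝔽] {E : Type} [AddCommGroup E] [Module 𝔽 E]

/-- The support of a vector with respect to the basis `b`. -/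
noncomputable def supp (b : Module.Basis ℕ 𝔽 E) (x : E) : Finset ℕ :=
  (b.repr x).support

/-- `VecLt b x y` means `x < y`: every element of the support of `x` is smaller than
every element of the support of `y`. -/
def VecLt (b : Module.Basis ℕ 𝔽 E) (x y : E) : Prop :=
  ∀ m ∈ supp b x, ∀ n ∈ supp b y, m < n

/-- `NatLt b k x` means `k < x`: `k` is smaller than every element of the support of `x`. -/
def NatLt (b : Module.Basis ℕ 𝔽 E) (k : ℕ) (x : E) : Prop :=
  ∀ n ∈ supp b x, k < n

/-- An infinite block sequence: a sequence of nonzero vectors with `x n < x (n + 1)`. -/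
def IsBlockSeq (b : Module.Basis ℕ 𝔽 E) (x : ℕ → E) : Prop :=
  (∀ n, x n ≠ 0) ∧ ∀ n, VecLt b (x n) (x (n + 1))

/-- A finite block sequence: a list of nonzero vectors, consecutively increasing in the
block ordering. -/
def IsFinBlockSeq (b : Module.Basis ℕ 𝔽 E) (l : List E) : Prop :=
  (∀ x ∈ l, x ≠ 0) ∧ l.Chain' (VecLt b)

/-- A block subspace: a subspace spanned by an infinite block sequence. -/
def IsBlockSubspace (b : Module.Basis ℕ 𝔽 E) (X : Submodule 𝔽 E) : Prop :=
  ∃ y : ℕ → E, IsBlockSeq b y ∧ X = Submodule.span 𝔽 (Set.range y)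

/-- The list of the first `n` values of a sequence. -/
def hist {α : Type _} (x : ℕ → α) (n : ℕ) : List α :=
  List.ofFn (fun j : Fin n => x j)

/-- The concatenation of a finite prefix with an infinite sequence. -/
def prefCat {α : Type _} (l : List α) (x : ℕ → α) : ℕ → α := fun n =>
  if h : n < l.length then l.get ⟨n, h⟩ else x (n - l.length)

/-- Player II has a strategy in Gowers' game `G_X(pre)` below `X` to play in `A`:
player I plays infinite-dimensional subspaces `Y i ≤ X`, player II answers with a
nonzero vector of `Y i`, the vectors played by II forming a block sequence, and the
outcome (the prefix `pre` followed by II's vectors) lies in `A`. -/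
def IIWinsG (b : Module.Basis ℕ 𝔽 E) (X : Submodule 𝔽 E) (pre : List E) (A : Set (ℕ → E)) :
    Prop :=
  ∃ σ : List (Submodule 𝔽 E) → E,
    ∀ Y : ℕ → Submodule 𝔽 E,
      (∀ i, Y i ≤ X ∧ ¬FiniteDimensional 𝔽 ↥(Y i)) →
      (∀ i, σ (hist Y (i + 1)) ∈ Y i ∧ σ (hist Y (i + 1)) ≠ 0 ∧
          VecLt b (σ (hist Y (i + 1))) (σ (hist Y (i + 2)))) ∧
        prefCat pre (fun i => σ (hist Y (i + 1))) ∈ A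

/-- Player I has a strategy in the infinite asymptotic game `F_X(pre)` below `X` to play
in `A`: player I plays strictly increasing natural numbers `n i`, player II answers with
nonzero vectors of `X` with `n i < x i` forming a block sequence, and the outcome
(the prefix `pre` followed by II's vectors) lies in `A`. -/
def IWinsF (b : Module.Basis ℕ 𝔽 E) (X : Submodule 𝔽 E) (pre : List E) (A : Set (ℕ → E)) :
    Prop :=
  ∃ σ : List E → ℕ,
    ∀ x : ℕ → E,
      (∀ i, x i ∈ X ∧ x i ≠ 0 ∧ NatLt b (σ (hist x i)) (x i) ∧
          VecLt b (x i) (x (i + 1))) →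
      (∀ i, σ (hist x i) < σ (hist x (i + 1))) ∧ prefCat pre x ∈ A

/-- A set `A ⊆ E^∞` is strategically Ramsey if for every block subspace `V` and every
finite block sequence `z`, there is a block subspace `W ≤ V` such that either II has a
strategy in `G_W(z)` to play in `A`, or I has a strategy in `F_W(z)` to play in `Aᶜ`. -/
def StrategicallyRamsey (b : Module.Basis ℕ 𝔽 E) (A : Set (ℕ → E)) : Prop :=
  ∀ V : Submodule 𝔽 E, IsBlockSubspace b V → ∀ z : List E, IsFinBlockSeq b z →
    ∃ W : Submodule 𝔽 E, W ≤ V ∧ IsBlockSubspace b W ∧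
      (IIWinsG b W z A ∨ IWinsF b W z Aᶜ)

end Defs
section Aux

open Submodule

variable {𝔽 : Type} [Field 𝔽] {E : Type} [AddCommGroup E] [Module 𝔽 E]
  (b : Module.Basis ℕ 𝔽 E)

lemma supp_nonempty {x : E} (hx : x ≠ 0) : (supp b x).Nonempty := by
  rw [Finset.nonempty_iff_ne_empty]
  intro h
  apply hx
  have h0 : b.repr x = 0 := Finsupp.support_eq_empty.mp h
  simpa using congrArg b.repr.symm h0

lemma vecLt_trans {x y z : E} (hy : y ≠ 0) (h1 : VecLt b x y) (h2 : VecLt b y z) :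
    VecLt b x z := by
  intro m hm n hn
  obtain ⟨p, hp⟩ := supp_nonempty b hy
  exact (h1 m hm p hp).trans (h2 p hp n hn)

lemma IsBlockSeq.lt {w : ℕ → E} (hw : IsBlockSeq b w) {i j : ℕ} (h : i < j) :
    VecLt b (w i) (w j) := by
  induction j with
  | zero => omega
  | succ j ih =>
    rcases Nat.lt_succ_iff_lt_or_eq.mp h with h' | h'
    · exact vecLt_trans b (hw.1 j) (ih h') (hw.2 j)
    · subst h'; exact hw.2 i

lemma IsBlockSeq.le_supp {w : ℕ → E} (hw : IsBlockSeq b w) :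
    ∀ j, ∀ n ∈ supp b (w j), j ≤ n := by
  intro j
  induction j with
  | zero => intro n _; exact Nat.zero_le n
  | succ j ih =>
    intro n hn
    obtain ⟨p, hp⟩ := supp_nonempty b (hw.1 j)
    exact Nat.succ_le_of_lt (lt_of_le_of_lt (ih p hp) (hw.2 j p hp n hn))

/-- The submodule of vectors whose support lies entirely beyond `N`. -/
def beyond (N : ℕ) : Submodule 𝔽 E where
  carrier := {x | NatLt b N x}
  add_mem' := by
    intro a c ha hc n hn
    rw [supp, map_add] at hn
    rcases Finset.mem_union.mp (Finsupp.support_add hn) with h | h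
    · exact ha n h
    · exact hc n h
  zero_mem' := by intro n hn; rw [supp, map_zero] at hn; simp at hn
  smul_mem' := by
    intro r x hx n hn
    rw [supp, map_smul] at hn
    exact hx n (Finsupp.support_smul hn)

lemma mem_beyond {N : ℕ} {x : E} : x ∈ beyond b N ↔ NatLt b N x := Iff.rfl

/-- The linear map reading off the first `N+1` coordinates. -/
noncomputable def headMap (N : ℕ) : E →ₗ[𝔽] (Fin (N + 1) → 𝔽) :=
  LinearMap.pi (fun i => (Finsupp.lapply (i : ℕ)).comp b.repr.toLinearMap)

lemma ker_headMap (N : ℕ) : LinearMap.ker (headMap b N) = beyond b N := by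
  ext x
  simp only [LinearMap.mem_ker, headMap, LinearMap.pi_apply, LinearMap.comp_apply,
    Finsupp.lapply_apply, LinearEquiv.coe_coe, funext_iff, Pi.zero_apply]
  constructor
  · intro h n hn
    rw [supp, Finsupp.mem_support_iff] at hn
    by_contra hle
    push_neg at hle
    exact hn (h ⟨n, Nat.lt_succ_of_le hle⟩)
  · intro h i
    by_contra hne
    have hmem : (i : ℕ) ∈ supp b x := Finsupp.mem_support_iff.mpr hne
    have := h _ hmem
    omega

lemma not_fd_inf_beyond (W : Submodule 𝔽 E) (hW : ¬FiniteDimensional 𝔽 W) (N : ℕ) :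
    ¬FiniteDimensional 𝔽 ↥(W ⊓ beyond b N) := by
  intro hfd
  apply hW
  set f := (headMap b N).comp W.subtype with hf
  have hker : LinearMap.ker f = Submodule.comap W.subtype (W ⊓ beyond b N) := by
    rw [hf, LinearMap.ker_comp, ker_headMap, Submodule.comap_inf,
      Submodule.comap_subtype_self, top_inf_eq]
  haveI : FiniteDimensional 𝔽 (LinearMap.ker f) := by
    rw [hker]
    exact LinearEquiv.finiteDimensional (Submodule.comapSubtypeEquivOfLe inf_le_left).symm
  haveI : FiniteDimensional 𝔽 (LinearMap.range f) := inferInstance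
  have h1 : Module.rank 𝔽 (LinearMap.ker f) < Cardinal.aleph0 := Module.rank_lt_aleph0 _ _
  have h2 : Module.rank 𝔽 (LinearMap.range f) < Cardinal.aleph0 := Module.rank_lt_aleph0 _ _
  have h3 := LinearMap.rank_range_add_rank_ker f
  have h4 : Module.rank 𝔽 W < Cardinal.aleph0 := by
    rw [← h3]; exact Cardinal.add_lt_aleph0 h2 h1
  exact Module.rank_lt_aleph0_iff.mp h4

lemma exists_nonzero_beyond (W : Submodule 𝔽 E) (hW : ¬FiniteDimensional 𝔽 W) (N : ℕ) :
    ∃ x, x ∈ W ∧ x ≠ 0 ∧ NatLt b N x := by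
  have h := not_fd_inf_beyond b W hW N
  have hne : W ⊓ beyond b N ≠ ⊥ := by
    intro hbot
    rw [hbot] at h
    exact h inferInstance
  obtain ⟨x, hx, hx0⟩ := Submodule.ne_bot_iff _ |>.mp hne
  exact ⟨x, (Submodule.mem_inf.mp hx).1, hx0, (Submodule.mem_inf.mp hx).2⟩

lemma natLt_sup_vecLt {x y : E} (h : NatLt b ((supp b x).sup id) y) : VecLt b x y := by
  intro m hm n hn
  exact lt_of_le_of_lt (Finset.le_sup (f := id) hm) (h n hn)

/-- Pick a block sequence inside an infinite-dimensional subspace. -/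
noncomputable def blockIn (W : Submodule 𝔽 E) (hW : ¬FiniteDimensional 𝔽 W) : ℕ → E
  | 0 => (exists_nonzero_beyond b W hW 0).choose
  | (k + 1) =>
    (exists_nonzero_beyond b W hW ((supp b (blockIn W hW k)).sup id)).choose

lemma exists_block_le (W : Submodule 𝔽 E) (hW : ¬FiniteDimensional 𝔽 W) :
    ∃ B, IsBlockSubspace b B ∧ B ≤ W := by
  have hspec : ∀ k, blockIn b W hW k ∈ W ∧ blockIn b W hW k ≠ 0 ∧
      VecLt b (blockIn b W hW k) (blockIn b W hW (k + 1)) := by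
    intro k
    have h1 := (exists_nonzero_beyond b W hW
      ((supp b (blockIn b W hW k)).sup id)).choose_spec
    have h0 : blockIn b W hW k ∈ W ∧ blockIn b W hW k ≠ 0 := by
      cases k with
      | zero =>
        have := (exists_nonzero_beyond b W hW 0).choose_spec
        exact ⟨this.1, this.2.1⟩
      | succ k =>
        have := (exists_nonzero_beyond b W hW
          ((supp b (blockIn b W hW k)).sup id)).choose_spec
        exact ⟨this.1, this.2.1⟩
    exact ⟨h0.1, h0.2, natLt_sup_vecLt b h1.2.2⟩
  refine ⟨Submodule.span 𝔽 (Set.range (blockIn b W hW)),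
    ⟨blockIn b W hW, ⟨fun k => (hspec k).2.1, fun k => (hspec k).2.2⟩, rfl⟩, ?_⟩
  rw [Submodule.span_le]
  rintro _ ⟨k, rfl⟩
  exact (hspec k).1

lemma block_nonzero_beyond {W : Submodule 𝔽 E} (hW : IsBlockSubspace b W) (N : ℕ) :
    ∃ x, x ∈ W ∧ x ≠ 0 ∧ NatLt b N x := by
  obtain ⟨y, hy, rfl⟩ := hW
  refine ⟨y (N + 1), Submodule.subset_span ⟨N + 1, rfl⟩, hy.1 _, ?_⟩
  intro n hn
  exact lt_of_lt_of_le (Nat.lt_succ_self N) (hy.le_supp b (N + 1) n hn)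

lemma block_tail {W : Submodule 𝔽 E} (hW : IsBlockSubspace b W) (N : ℕ) :
    ∃ Z, IsBlockSubspace b Z ∧ Z ≤ W ∧ Z ≤ beyond b N := by
  obtain ⟨y, hy, rfl⟩ := hW
  refine ⟨Submodule.span 𝔽 (Set.range fun i => y (i + (N + 1))),
    ⟨_, ⟨fun n => hy.1 _, fun n => hy.lt b (by omega)⟩, rfl⟩, ?_, ?_⟩
  · rw [Submodule.span_le]
    rintro _ ⟨i, rfl⟩
    exact Submodule.subset_span ⟨i + (N + 1), rfl⟩
  · rw [Submodule.span_le]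
    rintro _ ⟨i, rfl⟩
    intro n hn
    have := hy.le_supp b (i + (N + 1)) n hn
    omega

lemma IIWinsG_mono {Z' Z : Submodule 𝔽 E} {pre : List E} {A : Set (ℕ → E)}
    (h : Z' ≤ Z) (hw : IIWinsG b Z pre A) : IIWinsG b Z' pre A := by
  obtain ⟨σ, hσ⟩ := hw
  exact ⟨σ, fun Y hY => hσ Y (fun i => ⟨(hY i).1.trans h, (hY i).2⟩)⟩

lemma mem_span_tail {w : ℕ → E} (hw : IsBlockSeq b w) (k N : ℕ)
    (hN : ∀ j, j < k → ∀ n ∈ supp b (w j), n ≤ N)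
    {x : E} (hx : x ∈ Submodule.span 𝔽 (Set.range w)) (hxN : NatLt b N x) :
    x ∈ Submodule.span 𝔽 (w '' {j | k ≤ j}) := by
  obtain ⟨c, rfl⟩ := (Finsupp.mem_span_range_iff_exists_finsupp).mp hx
  have hzero : ∀ j ∈ c.support, k ≤ j := by
    intro j hj
    by_contra hlt
    push_neg at hlt
    obtain ⟨n, hn⟩ := supp_nonempty b (hw.1 j)
    have hrepr : b.repr (c.sum fun i a => a • w i) n = c j * b.repr (w j) n := by
      rw [map_finsuppSum, Finsupp.sum_apply]
      rw [Finsupp.sum_eq_single j]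
      · rw [map_smul]; rfl
      · intro i _ hij
        have hni : n ∉ supp b (w i) := by
          intro hni
          rcases lt_or_gt_of_ne hij with h' | h'
          · exact lt_irrefl n (hw.lt b h' n hni n hn)
          · exact lt_irrefl n (hw.lt b h' n hn n hni)
        rw [map_smul]
        have : b.repr (w i) n = 0 := Finsupp.notMem_support_iff.mp hni
        simp [this]
      · intro _; simp
    have hx0 : b.repr (c.sum fun i a => a • w i) n = 0 := by
      apply Finsupp.notMem_support_iff.mp
      intro hmem
      exact absurd (hN j hlt n hn) (not_le.mpr (hxN n hmem))
    rw [hx0] at hrepr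
    have hwj : b.repr (w j) n ≠ 0 := Finsupp.mem_support_iff.mp hn
    have := (mul_eq_zero.mp hrepr.symm).resolve_right hwj
    exact Finsupp.mem_support_iff.mp hj this
  apply Submodule.sum_mem
  intro j hj
  exact Submodule.smul_mem _ _ (Submodule.subset_span ⟨j, hzero j hj, rfl⟩)

lemma prefCat_concat {α : Type _} (l : List α) (y : α) (x : ℕ → α) :
    prefCat (l ++ [y]) x = prefCat l (fun n => Nat.casesOn n y x) := by
  funext n
  simp only [prefCat, List.length_append, List.length_singleton]
  rcases lt_trichotomy n l.length with h | h | h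
  · rw [dif_pos (by omega), dif_pos h]
    simp only [List.get_eq_getElem]
    exact List.getElem_append_left h
  · subst h
    rw [dif_pos (by omega), dif_neg (lt_irrefl _)]
    simp only [List.get_eq_getElem, Nat.sub_self]
    show (l ++ [y])[l.length] = y
    exact List.getElem_concat_length rfl _
  · rw [dif_neg (by omega), dif_neg (by omega)]
    have h1 : n - l.length = (n - l.length - 1) + 1 := by omega
    have h2 : n - (l.length + 1) = n - l.length - 1 := by omega
    rw [h1, h2]

lemma hist_succ {α : Type _} (x : ℕ → α) (n : ℕ) :
    hist x (n + 1) = x 0 :: hist (fun j => x (j + 1)) n := by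
  simp [hist, List.ofFn_succ]

lemma hist_map {α β : Type _} (x : ℕ → α) (f : α → β) (n : ℕ) :
    (hist x n).map f = hist (fun j => f (x j)) n := by
  simp [hist, List.map_ofFn]; rfl

lemma hist_ne_nil {α : Type _} (x : ℕ → α) (n : ℕ) : hist x (n + 1) ≠ [] := by
  simp [hist]

end Aux
section Constr

open Submodule

variable {𝔽 : Type} [Field 𝔽] {E : Type} [AddCommGroup E] [Module 𝔽 E]

open Classical in
/-- The fusion sequence of subspaces: at stage `k`, shrink to a subspace witnessing that
`(l ++ [v k], ·)` is good, if possible. -/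
noncomputable def Wseq (b : Module.Basis ℕ 𝔽 E) (U : Set (ℕ → E)) (l : List E)
    (X : Submodule 𝔽 E) (v : ℕ → E) : ℕ → Submodule 𝔽 E
  | 0 => X
  | (k + 1) =>
    if h : ∃ Z, Z ≤ Wseq b U l X v k ∧ IsBlockSubspace b Z ∧ IIWinsG b Z (l ++ [v k]) U
    then h.choose else Wseq b U l X v k

variable (b : Module.Basis ℕ 𝔽 E) (U : Set (ℕ → E)) (l : List E) (X : Submodule 𝔽 E) (v : ℕ → E)

lemma Wseq_succ_le (k : ℕ) : Wseq b U l X v (k + 1) ≤ Wseq b U l X v k := by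
  rw [Wseq]
  split
  next h => exact h.choose_spec.1
  next h => exact le_rfl

lemma Wseq_le {j k : ℕ} (h : j ≤ k) : Wseq b U l X v k ≤ Wseq b U l X v j := by
  induction k with
  | zero => cases Nat.le_zero.mp h; exact le_rfl
  | succ k ih =>
    rcases Nat.lt_succ_iff_lt_or_eq.mp (Nat.lt_succ_of_le h) with h' | h'
    · exact (Wseq_succ_le b U l X v k).trans (ih (Nat.lt_succ_iff.mp h'))
    · subst h'; exact le_rfl

lemma Wseq_block (hX : IsBlockSubspace b X) (k : ℕ) :
    IsBlockSubspace b (Wseq b U l X v k) := by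
  induction k with
  | zero => exact hX
  | succ k ih =>
    rw [Wseq]
    split
    next h => exact h.choose_spec.2.1
    next h => exact ih

lemma Wseq_good {k : ℕ}
    (h : ∃ Z, Z ≤ Wseq b U l X v k ∧ IsBlockSubspace b Z ∧ IIWinsG b Z (l ++ [v k]) U) :
    IIWinsG b (Wseq b U l X v (k + 1)) (l ++ [v k]) U := by
  rw [Wseq, dif_pos h]
  exact h.choose_spec.2.2

/-- The diagonal block sequence through the fusion sequence. -/
noncomputable def wseq (hX : IsBlockSubspace b X) : ℕ → E
  | 0 => (block_nonzero_beyond b (Wseq_block b U l X v hX 1) 0).choose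
  | (k + 1) =>
    (block_nonzero_beyond b (Wseq_block b U l X v hX (k + 2))
      ((supp b (wseq hX k)).sup id)).choose

variable (hX : IsBlockSubspace b X)

lemma wseq_spec (k : ℕ) : wseq b U l X v hX k ∈ Wseq b U l X v (k + 1) ∧
    wseq b U l X v hX k ≠ 0 := by
  cases k with
  | zero =>
    have := (block_nonzero_beyond b (Wseq_block b U l X v hX 1) 0).choose_spec
    exact ⟨this.1, this.2.1⟩
  | succ k =>
    have := (block_nonzero_beyond b (Wseq_block b U l X v hX (k + 2))
      ((supp b (wseq b U l X v hX k)).sup id)).choose_spec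
    exact ⟨this.1, this.2.1⟩

lemma wseq_blockSeq : IsBlockSeq b (wseq b U l X v hX) := by
  refine ⟨fun k => (wseq_spec b U l X v hX k).2, fun k => ?_⟩
  have := (block_nonzero_beyond b (Wseq_block b U l X v hX (k + 2))
    ((supp b (wseq b U l X v hX k)).sup id)).choose_spec
  exact natLt_sup_vecLt b this.2.2

end Constr
theorem bad_to_worse
    {𝔽 : Type} [Field 𝔽] [Countable 𝔽]
    {E : Type} [AddCommGroup E] [Module 𝔽 E]
    [TopologicalSpace E] [DiscreteTopology E]
    (b : Module.Basis ℕ 𝔽 E) (U : Set (ℕ → E)) (hU : IsOpen U)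
    (l : List E) (hl : IsFinBlockSeq b l)
    (X : Submodule 𝔽 E) (hX : IsBlockSubspace b X)
    (hbad : ∀ Y : Submodule 𝔽 E, IsBlockSubspace b Y → Y ≤ X → ¬IIWinsG b Y l U) :
    ∃ Z : Submodule 𝔽 E, IsBlockSubspace b Z ∧ Z ≤ X ∧
      (∀ Y : Submodule 𝔽 E, IsBlockSubspace b Y → Y ≤ Z → ¬IIWinsG b Y l U) ∧
      ∃ n : ℕ, ∀ y : E, y ∈ Z → y ≠ 0 → NatLt b n y →
        ∀ Y : Submodule 𝔽 E, IsBlockSubspace b Y → Y ≤ Z →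
          ¬IIWinsG b Y (l ++ [y]) U := by
  classical
  by_contra hcon
  push_neg at hcon
  have H : ∀ Z : Submodule 𝔽 E, IsBlockSubspace b Z → Z ≤ X → ∀ n : ℕ,
      ∃ y, y ∈ Z ∧ y ≠ 0 ∧ NatLt b n y ∧
        ∃ Y, IsBlockSubspace b Y ∧ Y ≤ Z ∧ IIWinsG b Y (l ++ [y]) U := by
    intro Z hZ hZX n
    exact hcon Z hZ hZX (fun Y hY hle => hbad Y hY (hle.trans hZX)) n
  haveI : Countable E := Countable.of_equiv _ b.repr.toEquiv.symm
  obtain ⟨v, hv⟩ := exists_surjective_nat E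
  have hwblk : IsBlockSeq b (wseq b U l X v hX) := wseq_blockSeq b U l X v hX
  set w : ℕ → E := wseq b U l X v hX with hwdef
  set Ysp : Submodule 𝔽 E := Submodule.span 𝔽 (Set.range w) with hYspdef
  have hYspblk : IsBlockSubspace b Ysp := ⟨w, hwblk, rfl⟩
  have hYspleX : Ysp ≤ X := by
    rw [hYspdef, Submodule.span_le]
    rintro _ ⟨k, rfl⟩
    exact Wseq_le b U l X v (Nat.zero_le (k + 1)) (wseq_spec b U l X v hX k).1
  set M : ℕ → ℕ := fun k => (Finset.range k).sup fun j => (supp b (w j)).sup id with hMdef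
  have htail : ∀ k : ℕ, ∀ x : E, x ∈ Ysp → NatLt b (M k) x → x ∈ Wseq b U l X v k := by
    intro k x hx hxN
    have hmem := mem_span_tail b hwblk k (M k) ?_ hx hxN
    · have hle : Submodule.span 𝔽 (w '' {j | k ≤ j}) ≤ Wseq b U l X v k := by
        rw [Submodule.span_le]
        rintro _ ⟨j, hj, rfl⟩
        exact Wseq_le b U l X v (Nat.le_succ_of_le hj) (wseq_spec b U l X v hX j).1
      exact hle hmem
    · intro j hj n hn
      refine le_trans (Finset.le_sup (f := id) hn) ?_
      exact Finset.le_sup (f := fun j => (supp b (w j)).sup id) (Finset.mem_range.mpr hj)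
  have FM : ∀ Y₀ : Submodule 𝔽 E, ∃ (y : E) (N : ℕ),
      (Y₀ ≤ Ysp ∧ ¬FiniteDimensional 𝔽 Y₀) →
      y ∈ Y₀ ∧ y ≠ 0 ∧ (∀ n ∈ supp b y, n ≤ N) ∧
        IIWinsG b (Ysp ⊓ beyond b N) (l ++ [y]) U := by
    intro Y₀
    by_cases hleg : Y₀ ≤ Ysp ∧ ¬FiniteDimensional 𝔽 Y₀
    · obtain ⟨B, hBblk, hBle⟩ := exists_block_le b Y₀ hleg.2
      have hBX : B ≤ X := (hBle.trans hleg.1).trans hYspleX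
      obtain ⟨y, hyB, hy0, -, Y', hY'blk, hY'le, hY'win⟩ := H B hBblk hBX 0
      obtain ⟨k, hk⟩ := hv y
      have hst : ∃ Z, Z ≤ Wseq b U l X v k ∧ IsBlockSubspace b Z ∧
          IIWinsG b Z (l ++ [v k]) U := by
        obtain ⟨Z, hZblk, hZle, hZbey⟩ := block_tail b hY'blk (M k)
        refine ⟨Z, ?_, hZblk, ?_⟩
        · intro z hz
          exact htail k z (hleg.1 (hBle (hY'le (hZle hz)))) (hZbey hz)
        · rw [hk]
          exact IIWinsG_mono b hZle hY'win
      have hWk1 := Wseq_good b U l X v hst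
      rw [hk] at hWk1
      refine ⟨y, max (M (k + 1)) ((supp b y).sup id), fun _ => ⟨hBle hyB, hy0, ?_, ?_⟩⟩
      · intro n hn
        exact le_max_of_le_right (Finset.le_sup (f := id) hn)
      · refine IIWinsG_mono b ?_ hWk1
        intro z hz
        rw [Submodule.mem_inf] at hz
        refine htail (k + 1) z hz.1 ?_
        intro n hn
        exact lt_of_le_of_lt (le_max_left _ _) (hz.2 n hn)
    · exact ⟨0, 0, fun hh => absurd hh hleg⟩
  choose y0 N0 hFM using FM
  have innerEx : ∀ Y₀ : Submodule 𝔽 E, ∃ σ0 : List (Submodule 𝔽 E) → E,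
      (Y₀ ≤ Ysp ∧ ¬FiniteDimensional 𝔽 Y₀) →
      ∀ Y : ℕ → Submodule 𝔽 E,
        (∀ i, Y i ≤ Ysp ⊓ beyond b (N0 Y₀) ∧ ¬FiniteDimensional 𝔽 ↥(Y i)) →
        (∀ i, σ0 (hist Y (i + 1)) ∈ Y i ∧ σ0 (hist Y (i + 1)) ≠ 0 ∧
            VecLt b (σ0 (hist Y (i + 1))) (σ0 (hist Y (i + 2)))) ∧
          prefCat (l ++ [y0 Y₀]) (fun i => σ0 (hist Y (i + 1))) ∈ U := by
    intro Y₀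
    by_cases hleg : Y₀ ≤ Ysp ∧ ¬FiniteDimensional 𝔽 Y₀
    · obtain ⟨σ0, hσ0⟩ := (hFM Y₀ hleg).2.2.2
      exact ⟨σ0, fun _ => hσ0⟩
    · exact ⟨fun _ => 0, fun hh => absurd hh hleg⟩
  choose σ0 hσ0 using innerEx
  set T : Submodule 𝔽 E → Submodule 𝔽 E → Submodule 𝔽 E :=
    fun Y₀ Z => Z ⊓ (Ysp ⊓ beyond b (N0 Y₀)) with hTdef
  set σ : List (Submodule 𝔽 E) → E := fun L =>
    match L with
    | [] => 0
    | Y₀ :: rest => if rest.isEmpty then y0 Y₀ else σ0 Y₀ (rest.map (T Y₀))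
    with hσdef
  have hσ1 : ∀ Y : ℕ → Submodule 𝔽 E, σ (hist Y 1) = y0 (Y 0) := by
    intro Y
    have h1 : hist Y 1 = [Y 0] := by simp [hist]
    rw [h1]
    rfl
  have hσ2 : ∀ (Y : ℕ → Submodule 𝔽 E) (i : ℕ),
      σ (hist Y (i + 2)) = σ0 (Y 0) (hist (fun j => T (Y 0) (Y (j + 1))) (i + 1)) := by
    intro Y i
    rw [show (i + 2) = (i + 1) + 1 from rfl, hist_succ]
    have h2 : σ (Y 0 :: hist (fun j => Y (j + 1)) (i + 1)) =
        if (hist (fun j => Y (j + 1)) (i + 1)).isEmpty then y0 (Y 0)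
        else σ0 (Y 0) ((hist (fun j => Y (j + 1)) (i + 1)).map (T (Y 0))) := rfl
    rw [h2, if_neg (by simp [hist]), hist_map]
  refine hbad Ysp hYspblk hYspleX ⟨σ, ?_⟩
  intro Y hY
  obtain ⟨hy0mem, hy0ne, hy0supp, -⟩ := hFM (Y 0) (hY 0)
  have hY'leg : ∀ i, (T (Y 0) (Y (i + 1))) ≤ Ysp ⊓ beyond b (N0 (Y 0)) ∧
      ¬FiniteDimensional 𝔽 ↥(T (Y 0) (Y (i + 1))) := by
    intro i
    refine ⟨inf_le_right, ?_⟩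
    have heq : T (Y 0) (Y (i + 1)) = Y (i + 1) ⊓ beyond b (N0 (Y 0)) := by
      rw [hTdef]
      simp only []
      rw [← inf_assoc, inf_eq_left.mpr (hY (i + 1)).1]
    rw [heq]
    exact not_fd_inf_beyond b _ (hY (i + 1)).2 _
  obtain ⟨hp, hpU⟩ := hσ0 (Y 0) (hY 0) (fun j => T (Y 0) (Y (j + 1))) hY'leg
  have hbey : ∀ i, NatLt b (N0 (Y 0))
      (σ0 (Y 0) (hist (fun j => T (Y 0) (Y (j + 1))) (i + 1))) := by
    intro i
    have hmem := (hp i).1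
    have hle : T (Y 0) (Y (i + 1)) ≤ beyond b (N0 (Y 0)) :=
      le_trans inf_le_right inf_le_right
    exact hle hmem
  constructor
  · intro i
    cases i with
    | zero =>
      refine ⟨?_, ?_, ?_⟩
      · rw [hσ1]; exact hy0mem
      · rw [hσ1]; exact hy0ne
      · rw [hσ1, hσ2 Y 0]
        intro m hm n hn
        exact lt_of_le_of_lt (hy0supp m hm) (hbey 0 n hn)
    | succ i =>
      rw [hσ2 Y i, hσ2 Y (i + 1)]
      obtain ⟨h1, h2, h3⟩ := hp i
      exact ⟨(inf_le_left : T (Y 0) (Y (i + 1)) ≤ Y (i + 1)) h1, h2, h3⟩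
  · have hqe : (fun i => σ (hist Y (i + 1))) = fun n =>
        Nat.casesOn n (y0 (Y 0))
          (fun i => σ0 (Y 0) (hist (fun j => T (Y 0) (Y (j + 1))) (i + 1))) := by
      funext n
      cases n with
      | zero => exact hσ1 Y
      | succ n => exact hσ2 Y n
    rw [hqe, ← prefCat_concat]
    exact hpU
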